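/- arXiv:2107.01176 — 2 statements merged into one kernel-verified Lean document; each statement's English description precedes it below -/
import Mathlib

section
/- Let J : ℝⁿ → ℝ be twice continuously differentiable with Hessian bounds Ḣ ⪯ ∇²J ⪯ H̄, and set Ĥ := (H̄+Ḣ)/2 and H̃ := H̄ − Ḣ. Then for all r, y, yₖ ∈ ℝⁿ, writing Δy := yₖ − y and e := y − r, we have |J(yₖ) − J(y) − ⟨Δy, ∇J(r)⟩ − ΔyᵀĤe − ½ΔyᵀĤΔy| ≤ ½‖Δy‖_H̃‖e‖_H̃ + ¼‖Δy‖²_H̃. -/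
open Matrix
open scoped RealInnerProductSpace

private lemma cs_aux {a b c : ℝ} (ha : 0 ≤ a) (hc : 0 ≤ c)
    (h : ∀ t : ℝ, 0 < t → |b| ≤ (t * a + c / t) / 2) :
    |b| ≤ Real.sqrt a * Real.sqrt c := by
  have key : ∀ t : ℝ, 0 ≤ a * (t * t) + (-(2 * |b|)) * t + c := by
    intro t
    rcases le_or_gt t 0 with ht | ht
    · nlinarith [abs_nonneg b]
    · have h1 := h t ht
      have h2 : c / t * t = c := div_mul_cancel₀ c (ne_of_gt ht)
      nlinarith
  have hd := discrim_le_zero key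
  rw [discrim] at hd
  have hb2 : |b| ^ 2 ≤ a * c := by nlinarith
  calc |b| = Real.sqrt (|b| ^ 2) := (Real.sqrt_sq (abs_nonneg b)).symm
    _ ≤ Real.sqrt (a * c) := Real.sqrt_le_sqrt hb2
    _ = Real.sqrt a * Real.sqrt c := Real.sqrt_mul ha c

private lemma bilin_cs {E : Type*} [AddCommGroup E] [Module ℝ E]
    (B D : E → E → ℝ)
    (hBsymm : ∀ u v, B u v = B v u)
    (hBadd : ∀ u v w, B (u + v) w = B u w + B v w)
    (hBsmul : ∀ (t : ℝ) (u v : E), B (t • u) v = t * B u v)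
    (hDsymm : ∀ u v, D u v = D v u)
    (hDadd : ∀ u v w, D (u + v) w = D u w + D v w)
    (hDsmul : ∀ (t : ℝ) (u v : E), D (t • u) v = t * D u v)
    (hbound : ∀ w, |B w w| ≤ D w w) (u v : E) :
    |B u v| ≤ Real.sqrt (D u u) * Real.sqrt (D v v) := by
  have hBadd' : ∀ u v w : E, B u (v + w) = B u v + B u w := by
    intro u v w; rw [hBsymm, hBadd, hBsymm v u, hBsymm w u]
  have hBsmul' : ∀ (t : ℝ) (u v : E), B u (t • v) = t * B u v := by
    intro t u v; rw [hBsymm, hBsmul, hBsymm v u]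
  have hDadd' : ∀ u v w : E, D u (v + w) = D u v + D u w := by
    intro u v w; rw [hDsymm, hDadd, hDsymm v u, hDsymm w u]
  have hDsmul' : ∀ (t : ℝ) (u v : E), D u (t • v) = t * D u v := by
    intro t u v; rw [hDsymm, hDsmul, hDsymm v u]
  have hBe : ∀ x y : E, B (x + y) (x + y) = B x x + 2 * B x y + B y y := by
    intro x y; rw [hBadd, hBadd', hBadd', hBsymm y x]; ring
  have hDe : ∀ x y : E, D (x + y) (x + y) = D x x + 2 * D x y + D y y := by
    intro x y; rw [hDadd, hDadd', hDadd', hDsymm y x]; ring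
  have hBneg : ∀ x y : E, B (x + (-1 : ℝ) • y) (x + (-1 : ℝ) • y)
      = B x x - 2 * B x y + B y y := by
    intro x y; rw [hBe, hBsmul', hBsmul, hBsmul']; ring
  have hDneg : ∀ x y : E, D (x + (-1 : ℝ) • y) (x + (-1 : ℝ) • y)
      = D x x - 2 * D x y + D y y := by
    intro x y; rw [hDe, hDsmul', hDsmul, hDsmul']; ring
  have hD0 : ∀ w, 0 ≤ D w w := fun w => le_trans (abs_nonneg _) (hbound w)
  -- parallelogram bound
  have par : ∀ x y : E, |B x y| ≤ (D x x + D y y) / 2 := by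
    intro x y
    have h1 := hbound (x + y)
    have h2 := hbound (x + (-1 : ℝ) • y)
    rw [hBe, hDe] at h1
    rw [hBneg, hDneg] at h2
    have e1 := abs_le.mp h1
    have e2 := abs_le.mp h2
    rcases abs_cases (B x y) with ⟨hB1, _⟩ | ⟨hB1, _⟩ <;>
      rcases abs_cases (D x y) with ⟨hD1, _⟩ | ⟨hD1, _⟩ <;> nlinarith [e1.1, e1.2, e2.1, e2.2]
  apply cs_aux (hD0 u) (hD0 v)
  intro t ht
  set s := Real.sqrt t with hs
  have hs0 : 0 < s := Real.sqrt_pos.mpr ht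
  have hss : s * s = t := Real.mul_self_sqrt ht.le
  have hBuv : B (s • u) (s⁻¹ • v) = B u v := by
    rw [hBsmul, hBsmul']; field_simp
  have hDu : D (s • u) (s • u) = t * D u u := by
    rw [hDsmul, hDsmul']; rw [← hss]; ring
  have hDv : D (s⁻¹ • v) (s⁻¹ • v) = D v v / t := by
    rw [hDsmul, hDsmul', ← hss]
    field_simp
  have := par (s • u) (s⁻¹ • v)
  rw [hBuv, hDu, hDv] at this
  linarith

private lemma mvt_quad (φ φ' : ℝ → ℝ) (K : ℝ)
    (hd : ∀ t, HasDerivAt φ (φ' t) t)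
    (hb : ∀ t ∈ Set.Ico (0:ℝ) 1, |φ' t| ≤ K * t) :
    |φ 1 - φ 0| ≤ K / 2 := by
  have h := image_norm_le_of_norm_deriv_right_le_deriv_boundary
    (f := fun t => φ t - φ 0) (f' := φ') (a := 0) (b := 1)
    (fun t _ => ((hd t).sub_const (φ 0)).continuousAt.continuousWithinAt)
    (fun t _ => ((hd t).sub_const (φ 0)).hasDerivWithinAt)
    (B := fun t => K / 2 * (t * t)) (B' := fun t => K * t)
    (by simp)
    (fun t => by
      have : HasDerivAt (fun t : ℝ => K / 2 * (t * t)) (K / 2 * (1 * t + t * 1)) t :=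
        ((hasDerivAt_id t).mul (hasDerivAt_id t)).const_mul (K / 2)
      convert this using 1; ring)
    (fun t ht => hb t ht)
  have := h (Set.right_mem_Icc.mpr zero_le_one)
  simpa using this

private lemma mvt_lin (φ φ' : ℝ → ℝ) (K : ℝ)
    (hd : ∀ t, HasDerivAt φ (φ' t) t)
    (hb : ∀ t ∈ Set.Ico (0:ℝ) 1, |φ' t| ≤ K) :
    |φ 1 - φ 0| ≤ K := by
  have h := image_norm_le_of_norm_deriv_right_le_deriv_boundary
    (f := fun t => φ t - φ 0) (f' := φ') (a := 0) (b := 1)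
    (fun t _ => ((hd t).sub_const (φ 0)).continuousAt.continuousWithinAt)
    (fun t _ => ((hd t).sub_const (φ 0)).hasDerivWithinAt)
    (B := fun t => K * t) (B' := fun t => K)
    (by simp)
    (fun t => by simpa using (hasDerivAt_id t).const_mul K)
    (fun t ht => hb t ht)
  have := h (Set.right_mem_Icc.mpr zero_le_one)
  simpa using this

private lemma dot_symm {n : ℕ} (M : Matrix (Fin n) (Fin n) ℝ) (hM : M.IsSymm)
    (u v : Fin n → ℝ) : u ⬝ᵥ M *ᵥ v = v ⬝ᵥ M *ᵥ u := by
  rw [Matrix.dotProduct_mulVec, ← Matrix.mulVec_transpose, hM.eq, dotProduct_comm]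

/-- With Hessian bounds `Ḣ ⪯ ∇²J ⪯ H̄`, `Ĥ := (H̄+Ḣ)/2`, `H̃ := H̄−Ḣ`, for all
`r, y, yₖ`, writing `Δy := yₖ − y` and `e := y − r`:
`|J(yₖ) − J(y) − ⟨Δy, ∇J(r)⟩ − ΔyᵀĤe − ½ΔyᵀĤΔy| ≤ ½‖Δy‖_H̃‖e‖_H̃ + ¼‖Δy‖²_H̃`. -/
theorem stmt_7 {n : ℕ} (J : EuclideanSpace ℝ (Fin n) → ℝ)
    (Hlo Hhi : Matrix (Fin n) (Fin n) ℝ)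
    (hHlo : Hlo.IsSymm) (hHhi : Hhi.IsSymm)
    (hJ : ContDiff ℝ 2 J)
    (hlow : ∀ z v : EuclideanSpace ℝ (Fin n),
      v ⬝ᵥ Hlo.mulVec v ≤ iteratedFDeriv ℝ 2 J z ![v, v])
    (hhigh : ∀ z v : EuclideanSpace ℝ (Fin n),
      iteratedFDeriv ℝ 2 J z ![v, v] ≤ v ⬝ᵥ Hhi.mulVec v)
    (r y yk : EuclideanSpace ℝ (Fin n)) :
    |J yk - J y - ⟪yk - y, gradient J r⟫
        - (yk - y) ⬝ᵥ (((2 : ℝ)⁻¹ • (Hhi + Hlo)).mulVec (y - r))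
        - (1 / 2) * ((yk - y) ⬝ᵥ (((2 : ℝ)⁻¹ • (Hhi + Hlo)).mulVec (yk - y)))|
      ≤ (1 / 2) * Real.sqrt ((yk - y) ⬝ᵥ (Hhi - Hlo).mulVec (yk - y))
            * Real.sqrt ((y - r) ⬝ᵥ (Hhi - Hlo).mulVec (y - r))
        + (1 / 4) * Real.sqrt ((yk - y) ⬝ᵥ (Hhi - Hlo).mulVec (yk - y)) ^ 2 := by

  have hJd : Differentiable ℝ J := hJ.differentiable (by norm_num)
  have hf'c : ContDiff ℝ 1 (fderiv ℝ J) := hJ.fderiv_right (by norm_num)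
  have hf'd : Differentiable ℝ (fderiv ℝ J) := hf'c.differentiable (by norm_num)
  have hsym : ∀ (z u v : EuclideanSpace ℝ (Fin n)),
      fderiv ℝ (fderiv ℝ J) z u v = fderiv ℝ (fderiv ℝ J) z v u :=
    fun z u v => second_derivative_symmetric (fun w => (hJd w).hasFDerivAt)
      ((hf'd z).hasFDerivAt) u v
  set Hm : Matrix (Fin n) (Fin n) ℝ := (2:ℝ)⁻¹ • (Hhi + Hlo) with hHm_def
  set Ht : Matrix (Fin n) (Fin n) ℝ := Hhi - Hlo with hHt_def
  have hHm : Hm.IsSymm := by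
    show Hmᵀ = Hm
    rw [hHm_def, Matrix.transpose_smul, Matrix.transpose_add, hHhi.eq, hHlo.eq]
  have hHt : Ht.IsSymm := by
    show Htᵀ = Ht
    rw [hHt_def, Matrix.transpose_sub, hHhi.eq, hHlo.eq]
  have hbd : ∀ (z w : EuclideanSpace ℝ (Fin n)),
      |fderiv ℝ (fderiv ℝ J) z w w - w ⬝ᵥ Hm *ᵥ w| ≤ (2:ℝ)⁻¹ * (w ⬝ᵥ Ht *ᵥ w) := by
    intro z w
    have hl := hlow z w
    have hh := hhigh z w
    rw [iteratedFDeriv_two_apply] at hl hh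
    simp only [Matrix.cons_val_zero, Matrix.cons_val_one, Matrix.head_cons] at hl hh
    have h1 : w ⬝ᵥ Hm *ᵥ w = ((w ⬝ᵥ Hhi *ᵥ w) + (w ⬝ᵥ Hlo *ᵥ w)) / 2 := by
      rw [hHm_def]
      simp [Matrix.add_mulVec, Matrix.smul_mulVec, dotProduct_add, dotProduct_smul,
        smul_eq_mul]
      ring
    have h2 : w ⬝ᵥ Ht *ᵥ w = (w ⬝ᵥ Hhi *ᵥ w) - (w ⬝ᵥ Hlo *ᵥ w) := by
      rw [hHt_def]
      simp [Matrix.sub_mulVec, dotProduct_sub]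
    rw [abs_le]
    constructor <;> nlinarith
  -- Cauchy-Schwarz for the deviation bilinear form
  have hBcs : ∀ (z u v : EuclideanSpace ℝ (Fin n)),
      |fderiv ℝ (fderiv ℝ J) z u v - u ⬝ᵥ Hm *ᵥ v|
        ≤ Real.sqrt ((2:ℝ)⁻¹ * (u ⬝ᵥ Ht *ᵥ u)) * Real.sqrt ((2:ℝ)⁻¹ * (v ⬝ᵥ Ht *ᵥ v)) := by
    intro z u v
    refine bilin_cs (fun u v => fderiv ℝ (fderiv ℝ J) z u v - u ⬝ᵥ Hm *ᵥ v)
      (fun u v => (2:ℝ)⁻¹ * (u ⬝ᵥ Ht *ᵥ v)) ?_ ?_ ?_ ?_ ?_ ?_ (hbd z) u v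
    · intro a b
      have e1 := dot_symm Hm hHm a b
      have e2 := hsym z a b
      simp only []
      rw [e1, e2]
    · intro a b c
      have e1 : (a + b) ⬝ᵥ Hm *ᵥ c = a ⬝ᵥ Hm *ᵥ c + b ⬝ᵥ Hm *ᵥ c := add_dotProduct a b _
      have e2 : fderiv ℝ (fderiv ℝ J) z (a + b) c
          = fderiv ℝ (fderiv ℝ J) z a c + fderiv ℝ (fderiv ℝ J) z b c := by
        rw [(fderiv ℝ (fderiv ℝ J) z).map_add, ContinuousLinearMap.add_apply]
      simp only []
      rw [e1, e2]; ring
    · intro t a b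
      have e1 : (t • a) ⬝ᵥ Hm *ᵥ b = t * (a ⬝ᵥ Hm *ᵥ b) := smul_dotProduct t a _
      have e2 : fderiv ℝ (fderiv ℝ J) z (t • a) b = t * fderiv ℝ (fderiv ℝ J) z a b := by
        rw [(fderiv ℝ (fderiv ℝ J) z).map_smul, ContinuousLinearMap.smul_apply, smul_eq_mul]
      simp only []
      rw [e1, e2]; ring
    · intro a b
      have e1 := dot_symm Ht hHt a b
      simp only []
      rw [e1]
    · intro a b c
      have e1 : (a + b) ⬝ᵥ Ht *ᵥ c = a ⬝ᵥ Ht *ᵥ c + b ⬝ᵥ Ht *ᵥ c := add_dotProduct a b _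
      simp only []
      rw [e1]; ring
    · intro t a b
      have e1 : (t • a) ⬝ᵥ Ht *ᵥ b = t * (a ⬝ᵥ Ht *ᵥ b) := smul_dotProduct t a _
      simp only []
      rw [e1]; ring
  -- derivative along lines
  have hD1 : ∀ (c v : EuclideanSpace ℝ (Fin n)) (t : ℝ),
      HasDerivAt (fun s : ℝ => J (c + s • v)) (fderiv ℝ J (c + t • v) v) t := by
    intro c v t
    have hline : HasDerivAt (fun s : ℝ => c + s • v) v t := by
      simpa using ((hasDerivAt_id t).smul_const v).const_add c
    exact (hJd (c + t • v)).hasFDerivAt.comp_hasDerivAt t hline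
  have hD2 : ∀ (c v w : EuclideanSpace ℝ (Fin n)) (t : ℝ),
      HasDerivAt (fun s : ℝ => fderiv ℝ J (c + s • v) w)
        (fderiv ℝ (fderiv ℝ J) (c + t • v) v w) t := by
    intro c v w t
    have hline : HasDerivAt (fun s : ℝ => c + s • v) v t := by
      simpa using ((hasDerivAt_id t).smul_const v).const_add c
    have hg : HasDerivAt (fun s : ℝ => fderiv ℝ J (c + s • v))
        (fderiv ℝ (fderiv ℝ J) (c + t • v) v) t :=
      (hf'd (c + t • v)).hasFDerivAt.comp_hasDerivAt t hline
    simpa using hg.clm_apply (hasDerivAt_const t w)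
  -- gradient difference bound
  have hgd : ∀ (c v w : EuclideanSpace ℝ (Fin n)),
      |fderiv ℝ J (c + v) w - fderiv ℝ J c w - w ⬝ᵥ Hm *ᵥ v|
        ≤ Real.sqrt ((2:ℝ)⁻¹ * (w ⬝ᵥ Ht *ᵥ w)) * Real.sqrt ((2:ℝ)⁻¹ * (v ⬝ᵥ Ht *ᵥ v)) := by
    intro c v w
    set K := Real.sqrt ((2:ℝ)⁻¹ * (w ⬝ᵥ Ht *ᵥ w)) * Real.sqrt ((2:ℝ)⁻¹ * (v ⬝ᵥ Ht *ᵥ v)) with hK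
    have hd : ∀ t : ℝ, HasDerivAt
        (fun s : ℝ => fderiv ℝ J (c + s • v) w - s * (w ⬝ᵥ Hm *ᵥ v))
        (fderiv ℝ (fderiv ℝ J) (c + t • v) v w - w ⬝ᵥ Hm *ᵥ v) t := by
      intro t
      exact (hD2 c v w t).sub (hasDerivAt_mul_const _)
    have hbnd : ∀ t ∈ Set.Ico (0:ℝ) 1,
        |fderiv ℝ (fderiv ℝ J) (c + t • v) v w - w ⬝ᵥ Hm *ᵥ v| ≤ K := by
      intro t _
      have h1 := hBcs (c + t • v) v w
      have e1 := dot_symm Hm hHm v w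
      rw [e1] at h1
      rw [hK, mul_comm]
      exact h1
    have := mvt_lin _ _ K hd hbnd
    have heq : (fderiv ℝ J (c + (1:ℝ) • v) w - 1 * (w ⬝ᵥ Hm *ᵥ v))
        - (fderiv ℝ J (c + (0:ℝ) • v) w - 0 * (w ⬝ᵥ Hm *ᵥ v))
        = fderiv ℝ J (c + v) w - fderiv ℝ J c w - w ⬝ᵥ Hm *ᵥ v := by
      rw [one_smul, zero_smul, add_zero]; ring
    rwa [heq] at this
  -- T2
  have hyr : r + (y - r) = y := by abel
  have hT2 := hgd r (y - r) (yk - y)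
  rw [hyr] at hT2
  -- T1
  have hmv : ∀ (M : Matrix (Fin n) (Fin n) ℝ) (a b : EuclideanSpace ℝ (Fin n)),
      M *ᵥ (a - b).ofLp = M *ᵥ (a.ofLp - b.ofLp) := fun _ _ _ => rfl
  simp only [hmv] at hT2
  have hA0 : 0 ≤ (yk - y) ⬝ᵥ Ht *ᵥ (yk - y) := by
    have := le_trans (abs_nonneg _) (hbd y (yk - y))
    simp only [hmv] at this
    linarith
  have hC0 : 0 ≤ (y - r) ⬝ᵥ Ht *ᵥ (y - r) := by
    have := le_trans (abs_nonneg _) (hbd y (y - r))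
    simp only [hmv] at this
    linarith
  have hbndT1 : ∀ t ∈ Set.Ico (0:ℝ) 1,
      |fderiv ℝ J (y + t • (yk - y)) (yk - y) - fderiv ℝ J y (yk - y)
        - t * ((yk - y) ⬝ᵥ Hm *ᵥ (yk - y))|
      ≤ ((2:ℝ)⁻¹ * ((yk - y) ⬝ᵥ Ht *ᵥ (yk - y))) * t := by
    intro t ht
    have h1 := hgd y (t • (yk - y)) (yk - y)
    have e1 : (yk - y) ⬝ᵥ Hm *ᵥ (t • (yk - y) : EuclideanSpace ℝ (Fin n))
        = t * ((yk - y) ⬝ᵥ Hm *ᵥ (yk - y)) := by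
      have h : Hm *ᵥ (t • (yk - y) : EuclideanSpace ℝ (Fin n)) = t • (Hm *ᵥ (yk - y)) :=
        Matrix.mulVec_smul Hm t (yk - y)
      rw [h, dotProduct_smul, smul_eq_mul]
    have e2 : ((t • (yk - y) : EuclideanSpace ℝ (Fin n))) ⬝ᵥ Ht *ᵥ
          (t • (yk - y) : EuclideanSpace ℝ (Fin n))
        = (t * t) * ((yk - y) ⬝ᵥ Ht *ᵥ (yk - y)) := by
      have h : Ht *ᵥ (t • (yk - y) : EuclideanSpace ℝ (Fin n)) = t • (Ht *ᵥ (yk - y)) :=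
        Matrix.mulVec_smul Ht t (yk - y)
      have h2 : ((t • (yk - y) : EuclideanSpace ℝ (Fin n))) ⬝ᵥ (t • (Ht *ᵥ (yk - y)))
          = t • ((yk - y) ⬝ᵥ (t • (Ht *ᵥ (yk - y)))) := smul_dotProduct t (yk - y) _
      rw [h, h2, dotProduct_smul, smul_eq_mul, smul_eq_mul]; ring
    rw [e1, e2] at h1
    have e3 : Real.sqrt ((2:ℝ)⁻¹ * ((t * t) * ((yk - y) ⬝ᵥ Ht *ᵥ (yk - y))))
        = t * Real.sqrt ((2:ℝ)⁻¹ * ((yk - y) ⬝ᵥ Ht *ᵥ (yk - y))) := by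
      rw [show (2:ℝ)⁻¹ * ((t * t) * ((yk - y) ⬝ᵥ Ht *ᵥ (yk - y)))
          = (t * t) * ((2:ℝ)⁻¹ * ((yk - y) ⬝ᵥ Ht *ᵥ (yk - y))) by ring,
        Real.sqrt_mul (mul_self_nonneg t), Real.sqrt_mul_self ht.1]
    rw [e3] at h1
    have hs : Real.sqrt ((2:ℝ)⁻¹ * ((yk - y) ⬝ᵥ Ht *ᵥ (yk - y)))
        * Real.sqrt ((2:ℝ)⁻¹ * ((yk - y) ⬝ᵥ Ht *ᵥ (yk - y)))
        = (2:ℝ)⁻¹ * ((yk - y) ⬝ᵥ Ht *ᵥ (yk - y)) :=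
      Real.mul_self_sqrt (by positivity)
    calc |fderiv ℝ J (y + t • (yk - y)) (yk - y) - fderiv ℝ J y (yk - y)
        - t * ((yk - y) ⬝ᵥ Hm *ᵥ (yk - y))|
        ≤ Real.sqrt ((2:ℝ)⁻¹ * ((yk - y) ⬝ᵥ Ht *ᵥ (yk - y)))
          * (t * Real.sqrt ((2:ℝ)⁻¹ * ((yk - y) ⬝ᵥ Ht *ᵥ (yk - y)))) := h1
      _ = ((2:ℝ)⁻¹ * ((yk - y) ⬝ᵥ Ht *ᵥ (yk - y))) * t := by linear_combination t * hs
  have hdT1 : ∀ t : ℝ, HasDerivAt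
      (fun s : ℝ => J (y + s • (yk - y)) - s * fderiv ℝ J y (yk - y)
        - s * s * ((2:ℝ)⁻¹ * ((yk - y) ⬝ᵥ Hm *ᵥ (yk - y))))
      (fderiv ℝ J (y + t • (yk - y)) (yk - y) - fderiv ℝ J y (yk - y)
        - t * ((yk - y) ⬝ᵥ Hm *ᵥ (yk - y))) t := by
    intro t
    have hq : HasDerivAt (fun s : ℝ => s * s * ((2:ℝ)⁻¹ * ((yk - y) ⬝ᵥ Hm *ᵥ (yk - y))))
        (t * ((yk - y) ⬝ᵥ Hm *ᵥ (yk - y))) t := by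
      have := ((hasDerivAt_id t).mul (hasDerivAt_id t)).mul_const
        ((2:ℝ)⁻¹ * ((yk - y) ⬝ᵥ Hm *ᵥ (yk - y)))
      refine this.congr_deriv ?_
      simp; ring
    exact ((hD1 y (yk - y) t).sub (hasDerivAt_mul_const _)).sub hq
  have hT1 := mvt_quad _ _ _ hdT1 hbndT1
  have hyk : y + (yk - y) = yk := by abel
  have heqT1 : (J (y + (1:ℝ) • (yk - y)) - 1 * fderiv ℝ J y (yk - y)
        - 1 * 1 * ((2:ℝ)⁻¹ * ((yk - y) ⬝ᵥ Hm *ᵥ (yk - y))))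
      - (J (y + (0:ℝ) • (yk - y)) - 0 * fderiv ℝ J y (yk - y)
        - 0 * 0 * ((2:ℝ)⁻¹ * ((yk - y) ⬝ᵥ Hm *ᵥ (yk - y))))
      = J yk - J y - fderiv ℝ J y (yk - y) - (2:ℝ)⁻¹ * ((yk - y) ⬝ᵥ Hm *ᵥ (yk - y)) := by
    rw [one_smul, zero_smul, add_zero, hyk]; ring
  rw [heqT1] at hT1
  -- assemble
  have hg : ⟪(yk - y : EuclideanSpace ℝ (Fin n)), gradient J r⟫ = fderiv ℝ J r (yk - y) := by
    rw [real_inner_comm]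
    exact InnerProductSpace.toDual_symm_apply
  have hhalfA : Real.sqrt ((2:ℝ)⁻¹ * ((yk - y) ⬝ᵥ Ht *ᵥ (yk - y)))
      = Real.sqrt 2⁻¹ * Real.sqrt ((yk - y) ⬝ᵥ Ht *ᵥ (yk - y)) :=
    Real.sqrt_mul (by norm_num) _
  have hhalfC : Real.sqrt ((2:ℝ)⁻¹ * ((y - r) ⬝ᵥ Ht *ᵥ (y - r)))
      = Real.sqrt 2⁻¹ * Real.sqrt ((y - r) ⬝ᵥ Ht *ᵥ (y - r)) :=
    Real.sqrt_mul (by norm_num) _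
  have h2i : Real.sqrt (2⁻¹:ℝ) * Real.sqrt (2⁻¹:ℝ) = 2⁻¹ := Real.mul_self_sqrt (by norm_num)
  have hsqA : Real.sqrt ((yk - y) ⬝ᵥ Ht *ᵥ (yk - y)) ^ 2 = (yk - y) ⬝ᵥ Ht *ᵥ (yk - y) :=
    Real.sq_sqrt hA0
  rw [hhalfA, hhalfC] at hT2
  rw [hg]
  have hsplit : J yk - J y - fderiv ℝ J r (yk - y) - (yk - y) ⬝ᵥ Hm *ᵥ (y - r)
      - 1 / 2 * ((yk - y) ⬝ᵥ Hm *ᵥ (yk - y))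
      = (J yk - J y - fderiv ℝ J y (yk - y) - (2:ℝ)⁻¹ * ((yk - y) ⬝ᵥ Hm *ᵥ (yk - y)))
        + (fderiv ℝ J y (yk - y) - fderiv ℝ J r (yk - y)
          - (yk - y) ⬝ᵥ Hm *ᵥ (y - r)) := by ring
  rw [hsplit]
  calc |(J yk - J y - fderiv ℝ J y (yk - y) - (2:ℝ)⁻¹ * ((yk - y) ⬝ᵥ Hm *ᵥ (yk - y)))
        + (fderiv ℝ J y (yk - y) - fderiv ℝ J r (yk - y)
          - (yk - y) ⬝ᵥ Hm *ᵥ (y - r))|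
      ≤ |J yk - J y - fderiv ℝ J y (yk - y) - (2:ℝ)⁻¹ * ((yk - y) ⬝ᵥ Hm *ᵥ (yk - y))|
        + |fderiv ℝ J y (yk - y) - fderiv ℝ J r (yk - y)
          - (yk - y) ⬝ᵥ Hm *ᵥ (y - r)| := abs_add_le _ _
    _ ≤ (2:ℝ)⁻¹ * ((yk - y) ⬝ᵥ Ht *ᵥ (yk - y)) / 2
        + Real.sqrt 2⁻¹ * Real.sqrt ((yk - y) ⬝ᵥ Ht *ᵥ (yk - y))
          * (Real.sqrt 2⁻¹ * Real.sqrt ((y - r) ⬝ᵥ Ht *ᵥ (y - r))) := add_le_add hT1 hT2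
    _ = 1 / 2 * Real.sqrt ((yk - y) ⬝ᵥ Ht *ᵥ (yk - y))
          * Real.sqrt ((y - r) ⬝ᵥ Ht *ᵥ (y - r))
        + 1 / 4 * Real.sqrt ((yk - y) ⬝ᵥ Ht *ᵥ (yk - y)) ^ 2 := by
        rw [hsqA]
        linear_combination (Real.sqrt ((yk - y) ⬝ᵥ Ht *ᵥ (yk - y))
          * Real.sqrt ((y - r) ⬝ᵥ Ht *ᵥ (y - r))) * h2i
end

section
/- Let K be a real symmetric positive semidefinite n×n matrix, Λ a real symmetric positive definite n×n matrix, α̲ ∈ (0,1), and θ ∈ ℝⁿ with ‖θ‖_K > 0. If Λ⁻¹ ⪰ ((2−α̲)/(1−α̲))·(√(‖K‖)/‖θ‖_K)·I, then every θ̃ ∈ ℝⁿ with ‖Λ⁻¹θ̃‖ ≤ 1 satisfies ‖θ̃‖_K ≤ (1−α̲)·‖θ + θ̃‖_K. -/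
open Matrix RealInnerProductSpace

section Aux

variable {n : ℕ}

private noncomputable def eE (v : Fin n → ℝ) : EuclideanSpace ℝ (Fin n) :=
  (WithLp.equiv 2 (Fin n → ℝ)).symm v

private lemma eE_inner (u v : Fin n → ℝ) :
    (inner ℝ (eE u) (eE v) : ℝ) = u ⬝ᵥ v := by
  change v ⬝ᵥ star u = u ⬝ᵥ v
  rw [star_trivial, dotProduct_comm]

private lemma eE_add (u v : Fin n → ℝ) : eE (u + v) = eE u + eE v := rfl

private lemma sqrt_dot (v : Fin n → ℝ) :
    Real.sqrt (v ⬝ᵥ v) = ‖eE v‖ := by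
  rw [← eE_inner, real_inner_self_eq_norm_sq, Real.sqrt_sq (norm_nonneg _)]

private lemma dot_le_opnorm (A : Matrix (Fin n) (Fin n) ℝ) (v : Fin n → ℝ) :
    v ⬝ᵥ A.mulVec v
      ≤ ‖(Matrix.toEuclideanCLM (𝕜 := ℝ) A :
            EuclideanSpace ℝ (Fin n) →L[ℝ] EuclideanSpace ℝ (Fin n))‖ * ‖eE v‖ ^ 2 := by
  have h1 : (Matrix.toEuclideanCLM (𝕜 := ℝ) A) (eE v) = eE (A.mulVec v) := by
    simp [eE, Matrix.toLin'_apply]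
  calc v ⬝ᵥ A.mulVec v = (inner ℝ (eE v) ((Matrix.toEuclideanCLM (𝕜 := ℝ) A) (eE v)) : ℝ) := by
        rw [h1, eE_inner]
    _ ≤ ‖eE v‖ * ‖(Matrix.toEuclideanCLM (𝕜 := ℝ) A) (eE v)‖ := real_inner_le_norm _ _
    _ ≤ ‖eE v‖ * (‖(Matrix.toEuclideanCLM (𝕜 := ℝ) A :
            EuclideanSpace ℝ (Fin n) →L[ℝ] EuclideanSpace ℝ (Fin n))‖ * ‖eE v‖) := by
        gcongr; exact ContinuousLinearMap.le_opNorm _ _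
    _ = _ := by ring

open scoped MatrixOrder in
private noncomputable def Matrix.PosSemidef.sqrt {K : Matrix (Fin n) (Fin n) ℝ}
    (_hK : K.PosSemidef) : Matrix (Fin n) (Fin n) ℝ := CFC.sqrt K

open scoped MatrixOrder in
private lemma Matrix.PosSemidef.posSemidef_sqrt {K : Matrix (Fin n) (Fin n) ℝ}
    (hK : K.PosSemidef) : hK.sqrt.PosSemidef := (CFC.sqrt_nonneg K).posSemidef

open scoped MatrixOrder in
private lemma Matrix.PosSemidef.sqrt_mul_self {K : Matrix (Fin n) (Fin n) ℝ}
    (hK : K.PosSemidef) : hK.sqrt * hK.sqrt = K := CFC.sqrt_mul_sqrt_self K hK.nonneg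

private lemma quad_eq_sqrtK {K : Matrix (Fin n) (Fin n) ℝ} (hK : K.PosSemidef)
    (v : Fin n → ℝ) :
    v ⬝ᵥ K.mulVec v = hK.sqrt.mulVec v ⬝ᵥ hK.sqrt.mulVec v := by
  set S := hK.sqrt with hS
  have hsym : Sᵀ = S := hK.posSemidef_sqrt.1
  conv_lhs => rw [← hK.sqrt_mul_self]
  rw [← Matrix.mulVec_mulVec, Matrix.dotProduct_mulVec, ← Matrix.mulVec_transpose, hsym]

end Aux

/-- key step of the paper's Lemma 2: for `K` symmetric PSD, `Λ` symmetric
positive definite, `α̲ ∈ (0,1)`, `‖θ‖_K > 0`, if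
`Λ⁻¹ ⪰ ((2−α̲)/(1−α̲))·(√(‖K‖)/‖θ‖_K)·I` then every `θ̃` with `‖Λ⁻¹θ̃‖ ≤ 1` satisfies
`‖θ̃‖_K ≤ (1−α̲)‖θ + θ̃‖_K`. -/
theorem stmt_14 {n : ℕ} (K Λ : Matrix (Fin n) (Fin n) ℝ)
    (hK : K.PosSemidef) (hΛ : Λ.PosDef)
    (α : ℝ) (hα : α ∈ Set.Ioo (0 : ℝ) 1)
    (θ : Fin n → ℝ) (hθ : 0 < Real.sqrt (θ ⬝ᵥ K.mulVec θ))
    (hinfo : (Λ⁻¹ - (((2 - α) / (1 - α))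
        * (Real.sqrt ‖(Matrix.toEuclideanCLM (𝕜 := ℝ) K :
              EuclideanSpace ℝ (Fin n) →L[ℝ] EuclideanSpace ℝ (Fin n))‖
            / Real.sqrt (θ ⬝ᵥ K.mulVec θ)))
        • (1 : Matrix (Fin n) (Fin n) ℝ)).PosSemidef)
    (θtil : Fin n → ℝ)
    (h : Real.sqrt (Λ⁻¹.mulVec θtil ⬝ᵥ Λ⁻¹.mulVec θtil) ≤ 1) :
    Real.sqrt (θtil ⬝ᵥ K.mulVec θtil)
      ≤ (1 - α) * Real.sqrt ((θ + θtil) ⬝ᵥ K.mulVec (θ + θtil)) := by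
  obtain ⟨hα0, hα1⟩ := hα
  set nK : ℝ := ‖(Matrix.toEuclideanCLM (𝕜 := ℝ) K :
      EuclideanSpace ℝ (Fin n) →L[ℝ] EuclideanSpace ℝ (Fin n))‖ with hnK
  set N : ℝ := Real.sqrt (θ ⬝ᵥ K.mulVec θ) with hN
  set c : ℝ := ((2 - α) / (1 - α)) * (Real.sqrt nK / N) with hc
  set S := hK.sqrt with hS
  -- the K-seminorm expressed via the Euclidean norm
  have nrm_eq : ∀ v : Fin n → ℝ, Real.sqrt (v ⬝ᵥ K.mulVec v) = ‖eE (S.mulVec v)‖ := by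
    intro v
    rw [quad_eq_sqrtK hK v, sqrt_dot]
  have hnK_nonneg : (0 : ℝ) ≤ nK := norm_nonneg _
  set a : ℝ := ‖eE θtil‖ with ha
  have ha0 : 0 ≤ a := norm_nonneg _
  -- nK > 0
  have hNpos : 0 < N := hθ
  have hN2 : N ^ 2 = θ ⬝ᵥ K.mulVec θ := by
    rw [hN]
    exact Real.sq_sqrt (hK.dotProduct_mulVec_nonneg θ)
  have hnKpos : 0 < nK := by
    by_contra hcon
    push_neg at hcon
    have h0 : nK = 0 := le_antisymm hcon hnK_nonneg
    have := dot_le_opnorm K θ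
    rw [← hnK, h0, ← hN2] at this
    nlinarith
  have hrpos : 0 < Real.sqrt nK := Real.sqrt_pos.mpr hnKpos
  have hcpos : 0 < c := by
    apply mul_pos (div_pos (by linarith) (by linarith)) (div_pos hrpos hNpos)
  -- (F1) : K-norm of θtil bounded by √nK * a
  have hF1 : Real.sqrt (θtil ⬝ᵥ K.mulVec θtil) ≤ Real.sqrt nK * a := by
    have h1 : θtil ⬝ᵥ K.mulVec θtil ≤ nK * a ^ 2 := dot_le_opnorm K θtil
    calc Real.sqrt (θtil ⬝ᵥ K.mulVec θtil) ≤ Real.sqrt (nK * a ^ 2) :=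
          Real.sqrt_le_sqrt h1
      _ = Real.sqrt nK * a := by
          rw [Real.sqrt_mul hnK_nonneg, Real.sqrt_sq ha0]
  -- (F2) : c * a² ≤ θtil ⬝ᵥ Λ⁻¹ θtil
  have hF2 : c * a ^ 2 ≤ θtil ⬝ᵥ Λ⁻¹.mulVec θtil := by
    have h2 := hinfo.dotProduct_mulVec_nonneg θtil
    have hst : star θtil = θtil := rfl
    rw [hst, Matrix.sub_mulVec, Matrix.smul_mulVec, Matrix.one_mulVec,
      dotProduct_sub, dotProduct_smul, sub_nonneg] at h2
    have hdot : θtil ⬝ᵥ θtil = a ^ 2 := by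
      rw [← eE_inner, real_inner_self_eq_norm_sq, ha]
    rw [hdot] at h2
    simpa [smul_eq_mul, hc] using h2
  -- (F3) : θtil ⬝ᵥ Λ⁻¹ θtil ≤ a
  have hF3 : θtil ⬝ᵥ Λ⁻¹.mulVec θtil ≤ a := by
    have hle : ‖eE (Λ⁻¹.mulVec θtil)‖ ≤ 1 := by rw [← sqrt_dot]; exact h
    calc θtil ⬝ᵥ Λ⁻¹.mulVec θtil = (inner ℝ (eE θtil) (eE (Λ⁻¹.mulVec θtil)) : ℝ) :=
          (eE_inner _ _).symm
      _ ≤ ‖eE θtil‖ * ‖eE (Λ⁻¹.mulVec θtil)‖ := real_inner_le_norm _ _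
      _ ≤ a * 1 := by gcongr
      _ = a := mul_one a
  -- a ≤ 1/c hence K-norm of θtil ≤ (1-α)/(2-α) * N
  have hca : c * a ≤ 1 := by nlinarith
  have h1α : (1 - α) ≠ 0 := by intro hcontra; linarith [sub_eq_zero.mp hcontra]
  have hKtil : Real.sqrt (θtil ⬝ᵥ K.mulVec θtil) * (2 - α) ≤ (1 - α) * N := by
    have hexp : c * ((1 - α) * N) = (2 - α) * Real.sqrt nK := by
      rw [hc]
      field_simp
    have h4 : Real.sqrt nK * a * (2 - α) ≤ (1 - α) * N := by
      have h5 := mul_le_mul_of_nonneg_right hca (le_of_lt (mul_pos (by linarith : (0:ℝ) < 1 - α) hNpos))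
      nlinarith
    nlinarith
  -- triangle inequality
  have htri : N ≤ Real.sqrt ((θ + θtil) ⬝ᵥ K.mulVec (θ + θtil))
      + Real.sqrt (θtil ⬝ᵥ K.mulVec θtil) := by
    rw [hN, nrm_eq, nrm_eq, nrm_eq]
    have heq : eE (S.mulVec θ) = (eE (S.mulVec (θ + θtil))) - eE (S.mulVec θtil) := by
      rw [Matrix.mulVec_add, eE_add]
      abel
    calc ‖eE (S.mulVec θ)‖ = ‖eE (S.mulVec (θ + θtil)) - eE (S.mulVec θtil)‖ := by
          rw [heq]
      _ ≤ _ := norm_sub_le _ _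
  have hKtil0 : 0 ≤ Real.sqrt (θtil ⬝ᵥ K.mulVec θtil) := Real.sqrt_nonneg _
  nlinarith [Real.sqrt_nonneg ((θ + θtil) ⬝ᵥ K.mulVec (θ + θtil))]
end
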